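/- Let (e_j)_{j=1,…,dim F} be a basis of F and, for each j, let ψ_j be the unique element of E satisfying ⟪ψ_j, v⟫_E + ⟪L ψ_j, L v⟫_F = ⟪e_j, L v⟫_F for all v in E. Then E is the internal direct sum of ker L and span{ψ_1, …, ψ_{dim F}}. -/

import Mathlib

open RealInnerProductSpace

/-- If, for a basis `(e j)` of `F`, `ψ j` satisfies the relaxed Euler–Lagrange equation
`⟪ψ j, v⟫ + ⟪L (ψ j), L v⟫ = ⟪e j, L v⟫` for all `v`, then `E` is the internal direct
sum of `ker L` and the span of the `ψ j`. -/
theorem ker_isCompl_span_relaxed_minimizers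
    {E F : Type*} [NormedAddCommGroup E] [InnerProductSpace ℝ E] [FiniteDimensional ℝ E]
    [NormedAddCommGroup F] [InnerProductSpace ℝ F] [FiniteDimensional ℝ F]
    (L : E →ₗ[ℝ] F) (hL : Function.Surjective L)
    (e : Module.Basis (Fin (Module.finrank ℝ F)) ℝ F)
    (ψ : Fin (Module.finrank ℝ F) → E)
    (hψ : ∀ j, ∀ v : E, ⟪ψ j, v⟫ + ⟪L (ψ j), L v⟫ = ⟪e j, L v⟫) :
    IsCompl (LinearMap.ker L) (Submodule.span ℝ (Set.range ψ)) := by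
  set K := LinearMap.ker L with hK
  -- each ψ j lies in Kᗮ
  have hmem : ∀ j, ψ j ∈ Kᗮ := by
    intro j
    rw [Submodule.mem_orthogonal]
    intro v hv
    have hv' : L v = 0 := hv
    have := hψ j v
    rw [hv'] at this
    simp only [inner_zero_right, add_zero] at this
    rw [real_inner_comm]
    exact this
  have hle : Submodule.span ℝ (Set.range ψ) ≤ Kᗮ :=
    Submodule.span_le.mpr (Set.range_subset_iff.mpr hmem)
  -- linear independence
  have hli : LinearIndependent ℝ ψ := by
    rw [Fintype.linearIndependent_iff]
    intro c hc
    have key : ∀ v : E, ⟪∑ j, c j • e j, L v⟫ = 0 := by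
      intro v
      have : ∑ j, c j * (⟪ψ j, v⟫ + ⟪L (ψ j), L v⟫) = ∑ j, c j * ⟪e j, L v⟫ := by
        exact Finset.sum_congr rfl fun j _ => by rw [hψ j v]
      calc ⟪∑ j, c j • e j, L v⟫ = ∑ j, c j * ⟪e j, L v⟫ := by
            rw [sum_inner]; exact Finset.sum_congr rfl fun j _ => real_inner_smul_left _ _ _
        _ = ∑ j, c j * (⟪ψ j, v⟫ + ⟪L (ψ j), L v⟫) := this.symm
        _ = ⟪∑ j, c j • ψ j, v⟫ + ⟪L (∑ j, c j • ψ j), L v⟫ := by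
            simp only [map_sum, map_smul, sum_inner, real_inner_smul_left, mul_add,
              Finset.sum_add_distrib]
        _ = 0 := by rw [hc]; simp
    have hsum : (∑ j, c j • e j) = 0 := by
      obtain ⟨w, hw⟩ := hL (∑ j, c j • e j)
      have := key w
      rw [hw] at this
      exact inner_self_eq_zero.mp this
    intro j
    have := Fintype.linearIndependent_iff.mp e.linearIndependent c hsum j
    exact this
  -- dimensions
  have h1 : Module.finrank ℝ (Submodule.span ℝ (Set.range ψ)) = Module.finrank ℝ F := by
    rw [finrank_span_eq_card hli, Fintype.card_fin]
  have h2 : Module.finrank ℝ Kᗮ = Module.finrank ℝ F := by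
    have hr : Module.finrank ℝ (LinearMap.range L) = Module.finrank ℝ F := by
      rw [LinearMap.range_eq_top.mpr hL, finrank_top]
    have h3 := LinearMap.finrank_range_add_finrank_ker L
    rw [← hK] at h3
    have h4 := Submodule.finrank_add_finrank_orthogonal (K := K)
    omega
  have heq : Submodule.span ℝ (Set.range ψ) = Kᗮ :=
    Submodule.eq_of_le_of_finrank_eq hle (by rw [h1, h2])
  rw [heq]
  exact Submodule.isCompl_orthogonal_of_hasOrthogonalProjection
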